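/- Let α be the unique real root of X³ − X − 1. Then for every integer n ≥ 0, the n-th Perrin number satisfies |P_n − αⁿ| < 3·α^{−n/2}. -/

import Mathlib

/-- The Perrin sequence: P 0 = 3, P 1 = 0, P 2 = 2, P (n+3) = P (n+1) + P n. -/
def perrin : ℕ → ℕ
  | 0 => 3
  | 1 => 0
  | 2 => 2
  | n + 3 => perrin (n + 1) + perrin n

/-- If `α` is the (unique) real root of `X³ − X − 1`, then `|P n − αⁿ| < 3·α^(−n/2)` for
every `n ≥ 0`. -/
theorem perrin_error_bound (α : ℝ) (hα : α ^ 3 - α - 1 = 0) (n : ℕ) :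
    |(perrin n : ℝ) - α ^ n| < 3 * α ^ (-(n : ℝ) / 2) := by
  have hα1 : 1 < α := by nlinarith [sq_nonneg α, sq_nonneg (α - 1), sq_nonneg (α + 1)]
  have hαpos : 0 < α := by linarith
  have hd2 : 0 ≤ 3 * α ^ 2 - 4 := by nlinarith
  obtain ⟨d, hd⟩ : ∃ d : ℝ, d = Real.sqrt (3 * α ^ 2 - 4) := ⟨_, rfl⟩
  have hdsq : d ^ 2 = 3 * α ^ 2 - 4 := by rw [hd]; exact Real.sq_sqrt hd2
  obtain ⟨β, hβ⟩ : ∃ β : ℂ, β = (-(α : ℂ) + d * Complex.I) / 2 := ⟨_, rfl⟩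
  obtain ⟨γ, hγ⟩ : ∃ γ : ℂ, γ = (-(α : ℂ) - d * Complex.I) / 2 := ⟨_, rfl⟩
  have hαC : (α : ℂ) ^ 3 - α - 1 = 0 := by exact_mod_cast hα
  have hdC : (d : ℂ) ^ 2 = 3 * (α : ℂ) ^ 2 - 4 := by exact_mod_cast hdsq
  have hqβ : β ^ 2 + α * β + ((α : ℂ) ^ 2 - 1) = 0 := by
    rw [hβ]; linear_combination (-(1 : ℂ)/4) * hdC + ((d : ℂ) ^ 2 / 4) * Complex.I_sq
  have hqγ : γ ^ 2 + α * γ + ((α : ℂ) ^ 2 - 1) = 0 := by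
    rw [hγ]; linear_combination (-(1 : ℂ)/4) * hdC + ((d : ℂ) ^ 2 / 4) * Complex.I_sq
  have hβ3 : β ^ 3 = β + 1 := by linear_combination (β - α) * hqβ + hαC
  have hγ3 : γ ^ 3 = γ + 1 := by linear_combination (γ - α) * hqγ + hαC
  have hsum : β + γ = -α := by rw [hβ, hγ]; ring
  have key : ∀ m, (perrin m : ℂ) = (α : ℂ) ^ m + β ^ m + γ ^ m := by
    intro m
    induction m using Nat.strong_induction_on with
    | _ m ih =>
      match m with
      | 0 => norm_num [perrin]
      | 1 =>
        show ((0 : ℕ) : ℂ) = _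
        push_cast
        linear_combination -hsum
      | 2 =>
        show ((2 : ℕ) : ℂ) = _
        push_cast
        linear_combination -hqβ - hqγ + (α : ℂ) * hsum
      | (k + 3) =>
        rw [show perrin (k + 3) = perrin (k + 1) + perrin k from rfl]
        push_cast
        rw [ih (k + 1) (by omega), ih k (by omega)]
        linear_combination (-(α : ℂ) ^ k) * hαC + β ^ k * (hβ3.symm) + γ ^ k * (hγ3.symm)
  have hconj : (starRingEnd ℂ) β = γ := by
    rw [hβ, hγ]
    simp [map_div₀, Complex.conj_I, Complex.conj_ofReal, map_ofNat]
    ring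
  have hnsq : (Complex.normSq β : ℂ) = (α : ℂ) ^ 2 - 1 := by
    rw [← Complex.mul_conj, hconj, hβ, hγ]
    linear_combination ((1 : ℂ)/4) * hdC + (-(d : ℂ) ^ 2 / 4) * Complex.I_sq
  have hnsqR : Complex.normSq β = α ^ 2 - 1 := by exact_mod_cast hnsq
  have habs2 : ‖β‖ ^ 2 = α ^ 2 - 1 := by rw [Complex.sq_norm, hnsqR]
  have hinv : α ^ 2 - 1 = α⁻¹ := by
    field_simp
    nlinarith
  have habs : ‖β‖ = α ^ ((-1 : ℝ) / 2) := by
    have h1 : ‖β‖ = Real.sqrt (α⁻¹) := by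
      rw [← Real.sqrt_sq (norm_nonneg β), habs2, hinv]
    rw [h1, Real.sqrt_eq_rpow, ← Real.rpow_neg_one, ← Real.rpow_mul hαpos.le]
    norm_num
  have habsγ : ‖γ‖ = α ^ ((-1 : ℝ) / 2) := by
    rw [← hconj, Complex.norm_conj, habs]
  have hpowβ : ‖β‖ ^ n = α ^ (-(n : ℝ) / 2) := by
    rw [habs, ← Real.rpow_natCast (α ^ ((-1 : ℝ) / 2)) n, ← Real.rpow_mul hαpos.le]
    ring_nf
  have heq : |(perrin n : ℝ) - α ^ n| = ‖β ^ n + γ ^ n‖ := by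
    rw [← Real.norm_eq_abs, ← Complex.norm_real]
    congr 1
    push_cast
    rw [key n]; ring
  have hrpos : (0 : ℝ) < α ^ (-(n : ℝ) / 2) := Real.rpow_pos_of_pos hαpos _
  calc |(perrin n : ℝ) - α ^ n| = ‖β ^ n + γ ^ n‖ := heq
    _ ≤ ‖β ^ n‖ + ‖γ ^ n‖ := norm_add_le _ _
    _ = ‖β‖ ^ n + ‖γ‖ ^ n := by rw [norm_pow, norm_pow]
    _ = 2 * (α ^ (-(n : ℝ) / 2)) := by rw [habsγ, ← habs, hpowβ]; ring
    _ < 3 * α ^ (-(n : ℝ) / 2) := by linarith
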